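/- Every root of P_m(t) = t(t^m(t-1) + (-1)^m · 2) other than 0 and -1 has absolute value strictly greater than 1. Consequently the Mahler measure of P_m is 2 and P_m has exactly m roots outside the unit circle (counted with multiplicity, for m ≥ 1). -/

import Mathlib

open Polynomial
open scoped Classical

/-- The Mahler measure: product of the absolute values of roots outside the
unit circle. -/
noncomputable def mahlerM (f : Polynomial ℤ) : ℝ :=
  (((f.aroots ℂ).filter (fun z => 1 < ‖z‖)).map
    (fun z => ‖z‖)).prod

private lemma key_root (m : ℕ) (hm : 1 ≤ m) {z : ℂ}
    (hz : z ^ m * (z - 1) + (-1) ^ m * 2 = 0) (habs : ‖z‖ ≤ 1) : z = -1 := by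
  have h0 : z ^ m * (z - 1) = -((-1 : ℂ) ^ m * 2) := by linear_combination hz
  have h1 : ‖z‖ ^ m * ‖z - 1‖ = 2 := by
    have := congrArg norm h0
    simpa [norm_mul, norm_pow] using this
  have h2 : ‖z - 1‖ ≤ 2 := by
    calc ‖z - 1‖ ≤ ‖z‖ + 1 := by
          simpa using norm_sub_le z 1
      _ ≤ 2 := by linarith
  have hzm : ‖z‖ ^ m ≤ 1 := pow_le_one₀ (norm_nonneg z) habs
  have h3 : ‖z - 1‖ = 2 := by
    nlinarith [norm_nonneg (z - 1), norm_nonneg z]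
  have h4 : ‖z‖ = 1 := by
    by_contra h
    have hlt : ‖z‖ < 1 := lt_of_le_of_ne habs h
    have : ‖z‖ ^ m < 1 := pow_lt_one₀ (norm_nonneg z) hlt (by omega)
    nlinarith
  have e1 : z.re * z.re + z.im * z.im = 1 := by
    have h : Complex.normSq z = 1 := by rw [← Complex.sq_norm, h4]; norm_num
    simpa [Complex.normSq_apply] using h
  have e2 : (z.re - 1) * (z.re - 1) + z.im * z.im = 4 := by
    have h : Complex.normSq (z - 1) = 4 := by rw [← Complex.sq_norm, h3]; norm_num
    simpa [Complex.normSq_apply, Complex.sub_re, Complex.sub_im] using h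
  have hre : z.re = -1 := by nlinarith
  have him : z.im = 0 := by nlinarith
  apply Complex.ext <;> simp [hre, him]

/-- All roots of `P_m(t) = t (t^m (t-1) + (-1)^m 2)` other than `0` and `-1`
lie strictly outside the unit circle; hence `M(P_m) = 2` and `N(P_m) = m`. -/
theorem stmt_7 (m : ℕ) (hm : 1 ≤ m) :
    (∀ z : ℂ, (Polynomial.aeval z) (X * (X ^ m * (X - 1) + C ((-1 : ℤ) ^ m * 2))) = 0 →
        z ≠ 0 → z ≠ -1 → 1 < ‖z‖) ∧
      mahlerM (X * (X ^ m * (X - 1) + C ((-1 : ℤ) ^ m * 2))) = 2 ∧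
      (((X * (X ^ m * (X - 1) + C ((-1 : ℤ) ^ m * 2)) : Polynomial ℤ).aroots ℂ).filter
          (fun z => 1 < ‖z‖)).card = m := by
  classical
  set c : ℂ := (-1) ^ m * 2 with hc
  set q : Polynomial ℂ := X ^ m * (X - 1) + C c with hqdef
  have hm1 : (X ^ m * (X - 1) : Polynomial ℂ).Monic :=
    (monic_X_pow m).mul (by simpa using monic_X_sub_C (1 : ℂ))
  have hdeg1 : (X ^ m * (X - 1) : Polynomial ℂ).natDegree = m + 1 := by
    rw [natDegree_mul (monic_X_pow m).ne_zero (by simpa using (monic_X_sub_C (1:ℂ)).ne_zero)]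
    simp [natDegree_X_pow]
    rw [show (X - 1 : Polynomial ℂ) = X - C 1 by simp, natDegree_X_sub_C]
  have hdegq : q.natDegree = m + 1 := by
    rw [hqdef, natDegree_add_C, hdeg1]
  have hmonic : q.Monic := by
    rw [hqdef]
    refine hm1.add_of_left (lt_of_le_of_lt degree_C_le ?_)
    rw [degree_eq_natDegree hm1.ne_zero, hdeg1]
    exact_mod_cast Nat.succ_pos m
  have hq0 : q ≠ 0 := hmonic.ne_zero
  have heval : q.eval (-1) = 0 := by
    simp only [hqdef, hc, eval_add, eval_mul, eval_pow, eval_X, eval_sub, eval_one, eval_C]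
    ring
  have hsplit : q.Splits := IsAlgClosed.splits q
  have hcard : q.roots.card = m + 1 := by
    rw [splits_iff_card_roots.mp hsplit, hdegq]
  have hprodall : q.roots.prod = -2 := by
    have h := hsplit.coeff_zero_eq_prod_roots_of_monic hmonic
    have hcoeff : q.coeff 0 = c := by
      rw [coeff_zero_eq_eval_zero, hqdef]
      simp [zero_pow (by omega : m ≠ 0)]
    rw [hcoeff, hdegq] at h
    have h1 : ((-1 : ℂ)) ^ (m + 1) * (-1) ^ (m + 1) = 1 := by
      rw [← pow_add]; exact Even.neg_one_pow ⟨m + 1, by ring⟩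
    have h2 : ((-1 : ℂ)) ^ (m + 1) * (-1) ^ m = -1 := by
      rw [← pow_add]; exact Odd.neg_one_pow ⟨m, by ring⟩
    calc q.roots.prod = ((-1 : ℂ)) ^ (m + 1) * (-1) ^ (m + 1) * q.roots.prod := by
          rw [h1, one_mul]
      _ = (-1 : ℂ) ^ (m + 1) * c := by rw [mul_assoc, ← h]
      _ = -2 := by rw [hc, ← mul_assoc, h2]; ring
  -- multiplicity of -1 is exactly one
  have hderiv : (derivative q).eval (-1) ≠ 0 := by
    obtain ⟨n, rfl⟩ : ∃ n, m = n + 1 := ⟨m - 1, by omega⟩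
    have hd : derivative q = (C ((n : ℂ) + 1) * X ^ n) * (X - 1) + X ^ (n + 1) := by
      rw [hqdef]
      rw [derivative_add, derivative_C, derivative_mul, derivative_X_pow, derivative_sub,
        derivative_X, derivative_one]
      push_cast
      ring
    rw [hd]
    simp only [eval_add, eval_mul, eval_pow, eval_X, eval_sub, eval_one, eval_C]
    have hpow : ((-1 : ℂ)) ^ n ≠ 0 := pow_ne_zero _ (by norm_num)
    have h23 : (2 * (n : ℂ) + 3) ≠ 0 := by
      have h : ((2 * n + 3 : ℕ) : ℂ) ≠ 0 := Nat.cast_ne_zero.mpr (by omega)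
      push_cast at h
      exact h
    intro h
    apply mul_ne_zero hpow h23
    rw [pow_succ] at h
    linear_combination -h
  have hcount : q.roots.count (-1) = 1 := by
    rw [count_roots]
    have hpos : 0 < q.rootMultiplicity (-1) := (rootMultiplicity_pos hq0).mpr heval
    by_contra hne
    have h2 : 2 ≤ q.rootMultiplicity (-1) := by omega
    have hd := derivative_rootMultiplicity_of_root heval
    have hdpos : 0 < (derivative q).rootMultiplicity (-1) := by omega
    have hd0 : derivative q ≠ 0 := by
      intro h; rw [h] at hdpos; simp [rootMultiplicity_zero] at hdpos
    exact hderiv ((rootMultiplicity_pos hd0).mp hdpos)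
  -- relating the integer polynomial to q
  have hmap : ((X * (X ^ m * (X - 1) + C ((-1 : ℤ) ^ m * 2)) : Polynomial ℤ).map
      (algebraMap ℤ ℂ)) = X * q := by
    have hcast : (algebraMap ℤ ℂ) ((-1) ^ m * 2) = c := by rw [hc]; push_cast; norm_num [mul_comm]
    rw [hqdef]
    simp only [Polynomial.map_mul, Polynomial.map_add, Polynomial.map_pow, Polynomial.map_sub,
      Polynomial.map_one, map_X, map_C, hcast]
  have haroots : ((X * (X ^ m * (X - 1) + C ((-1 : ℤ) ^ m * 2)) : Polynomial ℤ).aroots ℂ)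
      = 0 ::ₘ q.roots := by
    rw [aroots_def, hmap, roots_mul (mul_ne_zero X_ne_zero hq0), roots_X,
      Multiset.singleton_add]
  -- the key analytic fact
  have hkey : ∀ z ∈ q.roots, ¬ 1 < ‖z‖ → z = -1 := by
    intro z hz h
    have hzr : q.eval z = 0 := (isRoot_of_mem_roots hz)
    rw [hqdef] at hzr
    simp only [eval_add, eval_mul, eval_pow, eval_X, eval_sub, eval_one, eval_C, hc] at hzr
    exact key_root m hm hzr (not_lt.mp h)
  set F := q.roots.filter (fun z => 1 < ‖z‖) with hF
  set G := q.roots.filter (fun z => ¬ 1 < ‖z‖) with hG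
  have hFG : F + G = q.roots := Multiset.filter_add_not _ _
  have hGcount : G.count (-1) = 1 := by
    rw [hG, Multiset.count_filter]
    simp [hcount]
  have hGcard : G.card = 1 := by
    rw [← Multiset.count_eq_card.mpr
      (fun x hx => (hkey x (Multiset.mem_filter.mp hx).1 (Multiset.mem_filter.mp hx).2).symm)]
    exact hGcount
  have hGeq : G = {-1} := by
    have hrep : G = Multiset.replicate (Multiset.card G) (-1) := Multiset.eq_replicate_card.mpr
      (fun b hb => hkey b (Multiset.mem_filter.mp hb).1 (Multiset.mem_filter.mp hb).2)
    rw [hrep, hGcard]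
    rfl
  have hfilter : ((X * (X ^ m * (X - 1) + C ((-1 : ℤ) ^ m * 2)) : Polynomial ℤ).aroots ℂ).filter
      (fun z => 1 < ‖z‖) = F := by
    rw [haroots, Multiset.filter_cons_of_neg _ (by simp), hF]
  refine ⟨?_, ?_, ?_⟩
  · intro z hz hz0 hz1
    have hz' : z * (z ^ m * (z - 1) + (-1) ^ m * 2) = 0 := by
      have := hz
      simp only [map_mul, map_add, map_pow, map_sub, aeval_X, aeval_C, map_one,
        aeval_one, map_ofNat] at this
      push_cast at this
      convert this using 2
    have hq : z ^ m * (z - 1) + (-1) ^ m * 2 = 0 := by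
      rcases mul_eq_zero.mp hz' with h | h
      · exact absurd h hz0
      · exact h
    by_contra h
    exact hz1 (key_root m hm hq (not_lt.mp h))
  · unfold mahlerM
    rw [hfilter]
    have habsprod : (F.map (fun z => ‖z‖)).prod = ‖F.prod‖ :=
      (map_multiset_prod normHom F).symm
    have hFprod : F.prod = 2 := by
      have h1 : F.prod * G.prod = -2 := by
        rw [← Multiset.prod_add, hFG, hprodall]
      rw [hGeq] at h1
      simp only [Multiset.prod_singleton] at h1
      linear_combination -h1
    rw [habsprod, hFprod]
    simp
  · have hcardF : F.card + G.card = m + 1 := by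
      rw [← Multiset.card_add, hFG, hcard]
    rw [hfilter]
    omega
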